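/- Let v : ℝⁿ → ℝ be locally Lipschitz and satisfy ∇v(x)·x = v(x) for almost every x. Then v is positively homogeneous of degree 1: v(λx) = λv(x) for all λ > 0 and all x. -/

import Mathlib

open MeasureTheory Metric Set Filter
open scoped Topology ENNReal NNReal RealInnerProductSpace

noncomputable section

abbrev En (n : ℕ) := EuclideanSpace ℝ (Fin n)

/-- The Laplacian of a scalar function, as the sum of second partial derivatives. -/
def lap {n : ℕ} (u : En n → ℝ) (x : En n) : ℝ :=
  ∑ i, fderiv ℝ (fun y => fderiv ℝ u y (EuclideanSpace.single i 1)) x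
    (EuclideanSpace.single i 1)

/-- The divergence of a vector field. -/
def dvg {n : ℕ} (φ : En n → En n) (x : En n) : ℝ :=
  ∑ i, fderiv ℝ (fun y => φ y i) x (EuclideanSpace.single i 1)

/-- A locally Lipschitz function is Lipschitz on every compact set. -/
lemma exists_lipschitzOnWith_of_isCompact {X Y : Type*} [MetricSpace X] [MetricSpace Y]
    {f : X → Y} (hf : LocallyLipschitz f) {s : Set X} (hs : IsCompact s) :
    ∃ K : ℝ≥0, LipschitzOnWith K f s := by
  rcases s.eq_empty_or_nonempty with rfl | hne
  · exact ⟨0, by simp⟩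
  have H : ∀ x : X, ∃ K : ℝ≥0, ∃ U : Set X, IsOpen U ∧ x ∈ U ∧ LipschitzOnWith K f U := by
    intro x
    obtain ⟨K, t, ht, hK⟩ := hf x
    exact ⟨K, interior t, isOpen_interior, mem_interior_iff_mem_nhds.2 ht,
      hK.mono interior_subset⟩
  choose K U hUopen hxU hK using H
  obtain ⟨t, hts⟩ := hs.elim_finite_subcover U hUopen
    (fun x hx => mem_iUnion.2 ⟨x, hxU x⟩)
  -- Lebesgue number for the finite cover
  obtain ⟨δ, hδpos, hδ⟩ := lebesgue_number_lemma_of_metric hs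
    (c := fun i : {i : X // i ∈ t} => U i.1) (fun i => hUopen i.1)
    (by intro x hx
        obtain ⟨i, hi, hxi⟩ := mem_iUnion₂.1 (hts hx)
        exact mem_iUnion.2 ⟨⟨i, hi⟩, hxi⟩)
  -- bound on the image
  obtain ⟨C, hC⟩ := Metric.isBounded_iff.1 (hs.image hf.continuous).isBounded
  have hC0 : 0 ≤ C := by
    obtain ⟨x, hx⟩ := hne
    simpa using hC (Set.mem_image_of_mem f hx) (Set.mem_image_of_mem f hx)
  set K0 : ℝ≥0 := t.sup K
  refine ⟨K0 + Real.toNNReal (C / δ), ?_⟩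
  rw [lipschitzOnWith_iff_dist_le_mul]
  intro x hx y hy
  rcases lt_or_ge (dist x y) δ with h | h
  · obtain ⟨i, hi⟩ := hδ x hx
    have hxi : x ∈ U i.1 := hi (mem_ball_self hδpos)
    have hyi : y ∈ U i.1 := hi (by simpa [mem_ball, dist_comm] using h)
    have h1 : dist (f x) (f y) ≤ K i.1 * dist x y :=
      lipschitzOnWith_iff_dist_le_mul.1 (hK i.1) x hxi y hyi
    have h2 : (K i.1 : ℝ) ≤ (K0 : ℝ) := by
      exact_mod_cast Finset.le_sup (f := K) i.2
    have h3 : (0:ℝ) ≤ (Real.toNNReal (C/δ) : ℝ) := (Real.toNNReal (C/δ)).coe_nonneg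
    have := dist_nonneg (x := x) (y := y)
    push_cast
    nlinarith [dist_nonneg (x := f x) (y := f y)]
  · have h1 : dist (f x) (f y) ≤ C :=
      hC (Set.mem_image_of_mem f hx) (Set.mem_image_of_mem f hy)
    have h2 : C / δ ≤ (Real.toNNReal (C/δ) : ℝ) := Real.le_coe_toNNReal _
    have h3 : C ≤ (C / δ) * dist x y := by
      rw [div_mul_eq_mul_div, le_div_iff₀ hδpos]
      nlinarith
    have h4 : (0:ℝ) ≤ (K0:ℝ) := K0.coe_nonneg
    push_cast
    nlinarith [dist_nonneg (x := x) (y := y)]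
/-- The product of two locally Lipschitz real functions is locally Lipschitz. -/
lemma LocallyLipschitz.mul'' {X : Type*} [MetricSpace X] {f g : X → ℝ}
    (hf : LocallyLipschitz f) (hg : LocallyLipschitz g) :
    LocallyLipschitz (fun x => f x * g x) := by
  intro x
  obtain ⟨Kf, s, hs, hKf⟩ := hf x
  obtain ⟨Kg, t, ht, hKg⟩ := hg x
  refine ⟨Real.toNNReal ((|f x| + (Kf:ℝ)) * Kg + (|g x| + (Kg:ℝ)) * Kf), s ∩ t ∩ Metric.ball x 1,
    Filter.inter_mem (Filter.inter_mem hs ht) (Metric.ball_mem_nhds x one_pos), ?_⟩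
  rw [lipschitzOnWith_iff_dist_le_mul]
  have hxs : x ∈ s := mem_of_mem_nhds hs
  have hxt : x ∈ t := mem_of_mem_nhds ht
  have hbf : ∀ y, y ∈ s ∩ t ∩ Metric.ball x 1 → |f y| ≤ (|f x| + (Kf:ℝ)) := by
    intro y hy
    have h1 : dist (f y) (f x) ≤ Kf * dist y x :=
      lipschitzOnWith_iff_dist_le_mul.1 hKf y hy.1.1 x hxs
    have h2 : dist y x ≤ 1 := le_of_lt (by simpa [Metric.mem_ball] using hy.2)
    have h3 : (0:ℝ) ≤ Kf := Kf.coe_nonneg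
    rw [Real.dist_eq] at h1
    have := abs_sub_abs_le_abs_sub (f y) (f x)
    nlinarith [dist_nonneg (x:=y) (y:=x)]
  have hbg : ∀ y, y ∈ s ∩ t ∩ Metric.ball x 1 → |g y| ≤ (|g x| + (Kg:ℝ)) := by
    intro y hy
    have h1 : dist (g y) (g x) ≤ Kg * dist y x :=
      lipschitzOnWith_iff_dist_le_mul.1 hKg y hy.1.2 x hxt
    have h2 : dist y x ≤ 1 := le_of_lt (by simpa [Metric.mem_ball] using hy.2)
    have h3 : (0:ℝ) ≤ Kg := Kg.coe_nonneg
    rw [Real.dist_eq] at h1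
    have := abs_sub_abs_le_abs_sub (g y) (g x)
    nlinarith [dist_nonneg (x:=y) (y:=x)]
  intro y hy z hz
  have hfy := hbf y hy
  have hgz := hbg z hz
  have h1 : dist (g y) (g z) ≤ Kg * dist y z :=
    lipschitzOnWith_iff_dist_le_mul.1 hKg y hy.1.2 z hz.1.2
  have h2 : dist (f y) (f z) ≤ Kf * dist y z :=
    lipschitzOnWith_iff_dist_le_mul.1 hKf y hy.1.1 z hz.1.1
  rw [Real.dist_eq] at h1 h2 ⊢
  have key : |f y * g y - f y * g z + (f y * g z - f z * g z)| ≤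
      |f y| * |g y - g z| + |g z| * |f y - f z| := by
    calc |f y * g y - f y * g z + (f y * g z - f z * g z)|
        ≤ |f y * g y - f y * g z| + |f y * g z - f z * g z| := abs_add_le _ _
      _ = |f y| * |g y - g z| + |g z| * |f y - f z| := by
          rw [← mul_sub, ← sub_mul, abs_mul, abs_mul]; ring
  have hcoe : (|f x| + (Kf:ℝ)) * Kg + (|g x| + (Kg:ℝ)) * Kf ≤ (Real.toNNReal ((|f x| + (Kf:ℝ)) * Kg + (|g x| + (Kg:ℝ)) * Kf) : ℝ) :=
    Real.le_coe_toNNReal _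
  have h5 : (0:ℝ) ≤ |g y - g z| := abs_nonneg _
  have h6 : (0:ℝ) ≤ |f y - f z| := abs_nonneg _
  have h7 : (0:ℝ) ≤ |f y| := abs_nonneg _
  have h8 : (0:ℝ) ≤ |g z| := abs_nonneg _
  have h9 : (0:ℝ) ≤ dist y z := dist_nonneg
  have h3 : (0:ℝ) ≤ Kf := Kf.coe_nonneg
  have h4 : (0:ℝ) ≤ Kg := Kg.coe_nonneg
  have hCf : (0:ℝ) ≤ (|f x| + (Kf:ℝ)) := by positivity
  have hCg : (0:ℝ) ≤ (|g x| + (Kg:ℝ)) := by positivity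
  calc |f y * g y - f z * g z| = |f y * g y - f y * g z + (f y * g z - f z * g z)| := by ring_nf
    _ ≤ |f y| * |g y - g z| + |g z| * |f y - f z| := key
    _ ≤ (|f x| + (Kf:ℝ)) * (Kg * dist y z) + (|g x| + (Kg:ℝ)) * (Kf * dist y z) := by nlinarith
    _ ≤ (Real.toNNReal ((|f x| + (Kf:ℝ)) * Kg + (|g x| + (Kg:ℝ)) * Kf) : ℝ) * dist y z := by nlinarith
lemma le_of_lipschitzWith_ae_deriv_zero {f : ℝ → ℝ} {K : ℝ≥0} (hf : LipschitzWith K f)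
    (hd : ∀ᵐ t : ℝ, HasDerivAt f 0 t) {a b : ℝ} (hab : a ≤ b) : f a ≤ f b := by
  have hmono : Monotone (fun t => f t + K * t) := by
    intro s t hst
    have h1 := hf.dist_le_mul s t
    rw [Real.dist_eq, Real.dist_eq] at h1
    have h2 := le_abs_self (f s - f t)
    have h3 : |s - t| = t - s := by rw [abs_sub_comm, abs_of_nonneg (sub_nonneg.2 hst)]
    simp only []
    nlinarith [K.coe_nonneg]
  set g : StieltjesFunction ℝ :=
    { toFun := fun t => f t + K * t
      mono' := hmono
      right_continuous' := fun t =>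
        ((hf.continuous.add (continuous_const.mul continuous_id)).continuousAt).continuousWithinAt }
  have h1 : ∀ᵐ t : ℝ, HasDerivAt g (K : ℝ) t := by
    filter_upwards [hd] with t ht
    have := ht.add (((hasDerivAt_id t).const_mul (K : ℝ)))
    simp only [zero_add, mul_one] at this; exact this
  have h3 : ∀ᵐ t : ℝ, g.measure.rnDeriv volume t = ENNReal.ofReal (K : ℝ) := by
    filter_upwards [h1, g.ae_hasDerivAt, Measure.rnDeriv_lt_top g.measure volume]
      with t ht1 ht2 ht3
    have heq : (g.measure.rnDeriv volume t).toReal = (K : ℝ) := ht2.unique ht1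
    rw [← heq, ENNReal.ofReal_toReal ht3.ne]
  have key : ENNReal.ofReal ((K : ℝ) * (b - a)) ≤ ENNReal.ofReal (g b - g a) := by
    calc ENNReal.ofReal ((K : ℝ) * (b - a))
        = ∫⁻ _ in Ioc a b, ENNReal.ofReal (K : ℝ) := by
          rw [MeasureTheory.setLIntegral_const, Real.volume_Ioc,
            ← ENNReal.ofReal_mul K.coe_nonneg]
      _ = ∫⁻ t in Ioc a b, g.measure.rnDeriv volume t :=
          lintegral_congr_ae (ae_restrict_of_ae (h3.mono fun t ht => ht.symm))
      _ = (volume.withDensity (g.measure.rnDeriv volume)) (Ioc a b) :=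
          (withDensity_apply _ measurableSet_Ioc).symm
      _ ≤ g.measure (Ioc a b) := Measure.le_iff'.1 (Measure.withDensity_rnDeriv_le _ _) _
      _ = ENNReal.ofReal (g b - g a) := g.measure_Ioc a b
  have h4 : (K : ℝ) * (b - a) ≤ g b - g a :=
    (ENNReal.ofReal_le_ofReal_iff (sub_nonneg.2 (hmono hab))).1 key
  have : g b = f b + K * b := rfl
  have : g a = f a + K * a := rfl
  simp only [g] at h4
  nlinarith

lemma eq_of_lipschitzWith_ae_deriv_zero {f : ℝ → ℝ} {K : ℝ≥0} (hf : LipschitzWith K f)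
    (hd : ∀ᵐ t : ℝ, HasDerivAt f 0 t) {a b : ℝ} (hab : a ≤ b) : f a = f b := by
  refine le_antisymm (le_of_lipschitzWith_ae_deriv_zero hf hd hab) ?_
  have hf' : LipschitzWith K (fun t => -f t) := by
    exact hf.neg
  have hd' : ∀ᵐ t : ℝ, HasDerivAt (fun t => -f t) 0 t := by
    filter_upwards [hd] with t ht; have h := ht.neg; rw [neg_zero] at h; exact h
  have := le_of_lipschitzWith_ae_deriv_zero hf' hd' hab
  simpa using this

lemma eq_of_lipschitzOnWith_ae_deriv_zero {f : ℝ → ℝ} {K : ℝ≥0} {a b : ℝ} (hab : a ≤ b)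
    (hf : LipschitzOnWith K f (Icc a b))
    (hd : ∀ᵐ t ∂(volume.restrict (Ioo a b)), HasDerivAt f 0 t) : f a = f b := by
  set c : ℝ → ℝ := fun t => max a (min b t) with hc_def
  have hc : LipschitzWith 1 c := (LipschitzWith.id.const_min b).const_max a
  have hcmem : ∀ t, c t ∈ Icc a b := fun t =>
    ⟨le_max_left _ _, max_le hab (min_le_left _ _)⟩
  have hF : LipschitzWith K (f ∘ c) := by
    apply LipschitzWith.of_dist_le_mul
    intro s t
    calc dist (f (c s)) (f (c t)) ≤ K * dist (c s) (c t) :=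
          lipschitzOnWith_iff_dist_le_mul.1 hf _ (hcmem s) _ (hcmem t)
      _ ≤ K * dist s t := by
          have h1' : dist (c s) (c t) ≤ dist s t := by simpa using hc.dist_le_mul s t
          exact mul_le_mul_of_nonneg_left h1' K.coe_nonneg
  have h1 : ∀ᵐ t : ℝ, t ∈ Ioo a b → HasDerivAt f 0 t := (ae_restrict_iff' measurableSet_Ioo).1 hd
  have h2 : ∀ᵐ t : ℝ, t ≠ a := by
    rw [ae_iff]
    have : {t : ℝ | ¬ t ≠ a} = {a} := by ext u; simp
    rw [this]; exact measure_singleton a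
  have h3 : ∀ᵐ t : ℝ, t ≠ b := by
    rw [ae_iff]
    have : {t : ℝ | ¬ t ≠ b} = {b} := by ext u; simp
    rw [this]; exact measure_singleton b
  have hd' : ∀ᵐ t : ℝ, HasDerivAt (f ∘ c) 0 t := by
    filter_upwards [h1, h2, h3] with t ht hta htb
    rcases lt_trichotomy t a with h | h | h
    · have hev : (f ∘ c) =ᶠ[nhds t] (fun _ => f a) := by
        filter_upwards [isOpen_Iio.mem_nhds (show t ∈ Iio a from h)] with s hs
        have hsa : s < a := hs
        have : c s = a := by
          simp only [hc_def]
          rw [min_eq_right (hsa.le.trans hab), max_eq_left hsa.le]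
        simp [Function.comp, this]
      exact (hasDerivAt_const t (f a)).congr_of_eventuallyEq hev
    · exact absurd h hta
    · rcases lt_trichotomy t b with h' | h' | h'
      · have hev : (f ∘ c) =ᶠ[nhds t] f := by
          filter_upwards [isOpen_Ioo.mem_nhds (show t ∈ Ioo a b from ⟨h, h'⟩)] with s hs
          have : c s = s := by
            simp only [hc_def]
            rw [min_eq_right hs.2.le, max_eq_right hs.1.le]
          simp [Function.comp, this]
        exact (ht ⟨h, h'⟩).congr_of_eventuallyEq hev
      · exact absurd h' htb
      · have hev : (f ∘ c) =ᶠ[nhds t] (fun _ => f b) := by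
          filter_upwards [isOpen_Ioi.mem_nhds (show t ∈ Ioi b from h')] with s hs
          have hsb : b < s := hs
          have : c s = b := by
            simp only [hc_def]
            rw [min_eq_left hsb.le, max_eq_right hab]
          simp [Function.comp, this]
        exact (hasDerivAt_const t (f b)).congr_of_eventuallyEq hev
  have := eq_of_lipschitzWith_ae_deriv_zero hF hd' hab
  have hca : c a = a := by simp only [hc_def]; rw [min_eq_right hab, max_self]
  have hcb : c b = b := by simp only [hc_def]; rw [min_self, max_eq_right hab]
  simpa [Function.comp, hca, hcb] using this
lemma ae_ae_smul_not_mem {n : ℕ} {N : Set (En n)} (hN : volume N = 0) :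
    ∀ᵐ x : En n, ∀ᵐ t ∂(volume.restrict (Ioi (0:ℝ))), t • x ∉ N := by
  set M := toMeasurable volume N with hM_def
  have hM : volume M = 0 := by rwa [measure_toMeasurable]
  have hMm : MeasurableSet M := measurableSet_toMeasurable _ _
  set S : Set (En n × ℝ) := {p | p.2 • p.1 ∈ M} with hS_def
  have hSm : MeasurableSet S := (continuous_snd.smul continuous_fst).measurable hMm
  have key : (volume.prod (volume.restrict (Ioi (0:ℝ)))) S = 0 := by
    rw [Measure.prod_apply_symm hSm]
    have hz : ∀ᵐ t ∂(volume.restrict (Ioi (0:ℝ))),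
        volume ((fun x : En n => (x, t)) ⁻¹' S) = 0 := by
      filter_upwards [ae_restrict_mem measurableSet_Ioi] with t ht
      have hpre : (fun x : En n => (x, t)) ⁻¹' S = (t • ·) ⁻¹' M := rfl
      rw [hpre, Measure.addHaar_preimage_smul volume (ne_of_gt ht), hM, mul_zero]
    rw [lintegral_congr_ae hz, lintegral_zero]
  have hae : ∀ᵐ p ∂(volume.prod (volume.restrict (Ioi (0:ℝ)))), p ∉ S :=
    measure_eq_zero_iff_ae_notMem.1 key
  filter_upwards [Measure.ae_ae_of_ae_prod hae] with x hx
  filter_upwards [hx] with t ht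
  exact fun hmem => ht (subset_toMeasurable volume N hmem)

/-- Euler's identity a.e. implies homogeneity of degree one for locally Lipschitz
functions. -/
theorem stmt14 {n : ℕ} (v : En n → ℝ) (hlip : LocallyLipschitz v)
    (heuler : ∀ᵐ x : En n, ⟪gradient v x, x⟫ = v x) :
    ∀ l : ℝ, 0 < l → ∀ x, v (l • x) = l * v x := by
  classical
  have hdiff : ∀ᵐ x : En n, DifferentiableAt ℝ v x := by
    have H : ∀ k : ℕ, ∀ᵐ x : En n, x ∈ Metric.ball (0 : En n) k → DifferentiableAt ℝ v x := by
      intro k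
      obtain ⟨K, hK⟩ := exists_lipschitzOnWith_of_isCompact hlip
        (isCompact_closedBall (0 : En n) k)
      filter_upwards [(hK.mono Metric.ball_subset_closedBall).ae_differentiableWithinAt_of_mem
        (μ := volume)] with x hx hxb
      exact (hx hxb).differentiableAt (Metric.isOpen_ball.mem_nhds hxb)
    filter_upwards [ae_all_iff.2 H] with x hx
    obtain ⟨k, hk⟩ := exists_nat_gt ‖x‖
    exact hx k (by simpa [mem_ball_zero_iff] using hk)
  have hgrad : ∀ x : En n, ⟪gradient v x, x⟫ = fderiv ℝ v x x := by
    intro x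
    simp only [gradient]
    exact InnerProductSpace.toDual_symm_apply
  have hA : ∀ᵐ x : En n, DifferentiableAt ℝ v x ∧ fderiv ℝ v x x = v x := by
    filter_upwards [hdiff, heuler] with x h1 h2
    exact ⟨h1, by rw [← hgrad x]; exact h2⟩
  set A : Set (En n) := {x | DifferentiableAt ℝ v x ∧ fderiv ℝ v x x = v x} with hA_def
  have hAc : volume Aᶜ = 0 := by
    rw [hA_def, compl_setOf]
    exact ae_iff.1 hA
  have main : ∀ x : En n, (∀ᵐ t ∂(volume.restrict (Ioi (0:ℝ))), t • x ∈ A) →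
      ∀ l : ℝ, 0 < l → v (l • x) = l * v x := by
    intro x hx l hl
    set a : ℝ := min l 1 with ha_def
    set b : ℝ := max l 1 with hb_def
    have ha : 0 < a := lt_min hl one_pos
    have hab : a ≤ b := min_le_max
    have hc2 : 0 < a / 2 := by linarith
    have hxsm : LipschitzWith ‖x‖₊ (fun t : ℝ => t • x) := by
      apply LipschitzWith.of_dist_le_mul
      intro s t
      rw [dist_eq_norm, Real.dist_eq, ← sub_smul, norm_smul]
      simp [Real.norm_eq_abs, mul_comm]
    have hf_loclip : LocallyLipschitz (fun t : ℝ => v (t • x)) :=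
      hlip.comp hxsm.locallyLipschitz
    have hinv : LipschitzWith (Real.toNNReal ((a/2 * (a/2))⁻¹))
        (fun t : ℝ => (max t (a/2))⁻¹) := by
      apply LipschitzWith.of_dist_le_mul
      intro s t
      have hus : a/2 ≤ max s (a/2) := le_max_right _ _
      have hut : a/2 ≤ max t (a/2) := le_max_right _ _
      have hs0 : 0 < max s (a/2) := lt_of_lt_of_le hc2 hus
      have ht0 : 0 < max t (a/2) := lt_of_lt_of_le hc2 hut
      rw [Real.dist_eq, Real.dist_eq, inv_sub_inv hs0.ne' ht0.ne', abs_div]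
      have h1 : |max t (a/2) - max s (a/2)| ≤ |s - t| := by
        have := abs_max_sub_max_le_abs t s (a/2)
        rwa [abs_sub_comm s t]
      have h2 : (a/2) * (a/2) ≤ |max s (a/2) * max t (a/2)| := by
        rw [abs_of_pos (mul_pos hs0 ht0)]
        exact mul_le_mul hus hut hc2.le hs0.le
      have hcc : ((Real.toNNReal ((a/2 * (a/2))⁻¹)) : ℝ) = (a/2 * (a/2))⁻¹ :=
        Real.coe_toNNReal _ (by positivity)
      rw [hcc]
      calc |max t (a/2) - max s (a/2)| / |max s (a/2) * max t (a/2)|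
          ≤ |s - t| / (a/2 * (a/2)) :=
            div_le_div₀ (abs_nonneg _) h1 (by positivity) h2
        _ = (a/2 * (a/2))⁻¹ * |s - t| := by rw [div_eq_mul_inv, mul_comm]
    have hw_loclip : LocallyLipschitz (fun t : ℝ => v (t • x) * (max t (a/2))⁻¹) :=
      LocallyLipschitz.mul'' hf_loclip hinv.locallyLipschitz
    obtain ⟨K, hK⟩ := exists_lipschitzOnWith_of_isCompact hw_loclip
      (isCompact_Icc (a := a) (b := b))
    have hd : ∀ᵐ t ∂(volume.restrict (Ioo a b)),
        HasDerivAt (fun t : ℝ => v (t • x) * (max t (a/2))⁻¹) 0 t := by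
      have hle : volume.restrict (Ioo a b) ≤ volume.restrict (Ioi (0:ℝ)) :=
        Measure.restrict_mono (fun t ht => ha.trans ht.1) le_rfl
      filter_upwards [hx.filter_mono (ae_mono hle), ae_restrict_mem measurableSet_Ioo]
        with t htA htI
      have ht0 : 0 < t := ha.trans htI.1
      have hdiffat : DifferentiableAt ℝ v (t • x) := htA.1
      have hF : HasDerivAt (fun s : ℝ => v (s • x)) (fderiv ℝ v (t • x) x) t := by
        have h1 : HasDerivAt (fun s : ℝ => s • x) ((1:ℝ) • x) t :=
          (hasDerivAt_id t).smul_const x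
        have := hdiffat.hasFDerivAt.comp_hasDerivAt t h1
        simpa [Function.comp_def] using this
      have hfx : fderiv ℝ v (t • x) x = v (t • x) / t := by
        have h2 : fderiv ℝ v (t • x) (t • x) = v (t • x) := htA.2
        have h2' : t * (fderiv ℝ v (t • x)) x = v (t • x) := by
          rw [← h2, ContinuousLinearMap.map_smul, smul_eq_mul]
        rw [eq_div_iff ht0.ne']
        linarith [h2']
      have hmul : HasDerivAt (fun s : ℝ => v (s • x) * s⁻¹)
          (fderiv ℝ v (t • x) x * t⁻¹ + v (t • x) * (-(t^2)⁻¹)) t :=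
        hF.mul (hasDerivAt_inv ht0.ne')
      have hzero : fderiv ℝ v (t • x) x * t⁻¹ + v (t • x) * (-(t^2)⁻¹) = 0 := by
        rw [hfx]
        field_simp
        ring
      have hev : (fun s : ℝ => v (s • x) * (max s (a/2))⁻¹) =ᶠ[nhds t]
          (fun s : ℝ => v (s • x) * s⁻¹) := by
        have htm : t ∈ Ioi (a/2) := by
          simp only [mem_Ioi]
          linarith [htI.1]
        filter_upwards [isOpen_Ioi.mem_nhds htm] with s hs
        rw [max_eq_left (le_of_lt hs)]
      rw [hzero] at hmul
      exact hmul.congr_of_eventuallyEq hev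
    have hres := eq_of_lipschitzOnWith_ae_deriv_zero hab hK hd
    rw [max_eq_left (by linarith : a/2 ≤ a), max_eq_left (by linarith : a/2 ≤ b)] at hres
    rcases le_total l 1 with hl1 | hl1
    · have haa : a = l := min_eq_left hl1
      have hbb : b = 1 := max_eq_right hl1
      rw [haa, hbb] at hres
      rw [one_smul, inv_one, mul_one] at hres
      field_simp at hres
      linarith [hres]
    · have haa : a = 1 := min_eq_right hl1
      have hbb : b = l := max_eq_left hl1
      rw [haa, hbb] at hres
      rw [one_smul, inv_one, mul_one] at hres
      field_simp at hres
      linarith [hres]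
  have hG : Dense {y : En n | ∀ᵐ t ∂(volume.restrict (Ioi (0:ℝ))), t • y ∈ A} := by
    apply Measure.dense_of_ae (μ := (volume : Measure (En n)))
    filter_upwards [ae_ae_smul_not_mem hAc] with y hy
    filter_upwards [hy] with t ht
    simpa using ht
  intro l hl x
  have heq : (fun y : En n => v (l • y)) = fun y => l * v y := by
    refine Continuous.ext_on hG ?_ ?_ ?_
    · exact hlip.continuous.comp (continuous_const_smul l)
    · exact continuous_const.mul hlip.continuous
    · intro y hy
      exact main y hy l hl
  exact congrFun heq x

end
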